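/- For every n ≥ 6, there exists a binary string of length n that cannot be uniquely reconstructed up to reversal from its prefix-suffix composition multiset; concretely, the string 1 0 0 s_4 ... s_{n-3} 1 1 0 (for any middle symbols) shares its prefix-suffix composition multiset with a string that is neither itself nor its reversal. -/

import Mathlib

/-- The composition of a binary string: (length, number of ones). -/
def comp (t : List Bool) : ℕ × ℕ := (t.length, t.count true)

/-- The prefix-suffix composition multiset of a binary string. -/
def psM (s : List Bool) : Multiset (ℕ × ℕ) :=
  ((List.range s.length).map (fun j => comp (s.take (j + 1))) : Multiset (ℕ × ℕ))
  + ((List.range s.length).map (fun i => comp (s.drop i)) : Multiset (ℕ × ℕ))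

lemma take_eq_aux (m' : List Bool) (j : ℕ) (hj : j ≤ m'.length + 1) :
    (m' ++ [true, false, true]).take j = (m' ++ [true, true, false]).take j := by
  rw [List.take_append, List.take_append]
  have h : j - m'.length = 0 ∨ j - m'.length = 1 := by omega
  rcases h with h | h <;> simp [h]

lemma drop_comp_aux (m' : List Bool) (i : ℕ) (hi : i ≤ m'.length + 1) :
    comp ((m' ++ [true, false, true]).drop i) = comp ((m' ++ [true, true, false]).drop i) := by
  rw [List.drop_append, List.drop_append]
  have h : i - m'.length = 0 ∨ i - m'.length = 1 := by omega
  rcases h with h | h <;> simp [h, comp, List.count_append, List.count_cons]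

lemma psM_decomp (u : List Bool) (k : ℕ) (h : u.length = k + 3) :
    psM u =
      (comp (u.take 1) ::ₘ ((List.range k).map (fun j => comp (u.take (j + 2))) : Multiset (ℕ × ℕ))
        + {comp (u.take (k + 2)), comp (u.take (k + 3))})
      + ((comp (u.drop 0) ::ₘ comp (u.drop 1) ::ₘ
            ((List.range k).map (fun i => comp (u.drop (i + 2))) : Multiset (ℕ × ℕ)))
        + {comp (u.drop (k + 2))}) := by
  have hr1 : List.range (k + 3) = 0 :: ((List.range k).map Nat.succ ++ [k + 1, k + 2]) := by
    rw [show k + 3 = (k + 2) + 1 from rfl, List.range_succ,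
        show k + 2 = (k + 1) + 1 from rfl, List.range_succ, List.range_succ_eq_map]
    simp
  have hr2 : List.range (k + 3) = 0 :: 1 :: ((List.range k).map (fun i => i + 2) ++ [k + 2]) := by
    rw [show k + 3 = (k + 2) + 1 from rfl, List.range_succ,
        List.range_succ_eq_map, List.range_succ_eq_map]
    simp [List.map_map, Function.comp, Nat.succ_eq_add_one]
  unfold psM
  rw [h]
  nth_rewrite 1 [hr1]
  rw [hr2]
  simp only [List.map_cons, List.map_append, List.map_map, Function.comp_def,
    Nat.succ_eq_add_one, add_assoc]
  norm_num
  simp only [← Multiset.cons_coe, show ∀ (l₁ l₂ : List (ℕ×ℕ)), (↑(l₁ ++ l₂) : Multiset (ℕ×ℕ)) = ↑l₁ + ↑l₂ from fun _ _ => rfl, ← Multiset.singleton_add, Multiset.insert_eq_cons]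
  abel

lemma key (m : List Bool) :
    psM (false :: true :: false :: (m ++ [true, false, true]))
      = psM (true :: false :: false :: (m ++ [true, true, false])) := by
  have ht : (false :: true :: false :: (m ++ [true, false, true])).length = (m.length + 3) + 3 := by
    simp
  have hs : (true :: false :: false :: (m ++ [true, true, false])).length = (m.length + 3) + 3 := by
    simp
  rw [psM_decomp _ (m.length + 3) ht, psM_decomp _ (m.length + 3) hs]
  have hmid1 : (List.range (m.length + 3)).map
        (fun j => comp ((false :: true :: false :: (m ++ [true, false, true])).take (j + 2)))
      = (List.range (m.length + 3)).map
        (fun j => comp ((true :: false :: false :: (m ++ [true, true, false])).take (j + 2))) := by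
    apply List.map_congr_left
    intro j hj
    rw [List.mem_range] at hj
    rw [show j + 2 = (j + 1) + 1 from rfl, List.take_succ_cons, List.take_succ_cons,
        show (false : Bool) :: (m ++ [true, false, true]) = (false :: m) ++ [true, false, true] from rfl,
        show (false : Bool) :: (m ++ [true, true, false]) = (false :: m) ++ [true, true, false] from rfl,
        take_eq_aux (false :: m) j (by simp; omega)]
    simp [comp, List.count_cons]
  have hmid2 : (List.range (m.length + 3)).map
        (fun i => comp ((false :: true :: false :: (m ++ [true, false, true])).drop (i + 2)))
      = (List.range (m.length + 3)).map
        (fun i => comp ((true :: false :: false :: (m ++ [true, true, false])).drop (i + 2))) := by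
    apply List.map_congr_left
    intro i hi
    rw [List.mem_range] at hi
    rw [show i + 2 = (i + 1) + 1 from rfl]
    simp only [List.drop_succ_cons]
    rw [show (false : Bool) :: (m ++ [true, false, true]) = (false :: m) ++ [true, false, true] from rfl,
        show (false : Bool) :: (m ++ [true, true, false]) = (false :: m) ++ [true, true, false] from rfl,
        drop_comp_aux (false :: m) i (by simp; omega)]
  rw [hmid1, hmid2]
  have htk : ∀ (B : List Bool), (m ++ B).take (m.length + 2) = m ++ B.take 2 := fun B => by
    rw [List.take_append, List.take_of_length_le (by omega),
        show m.length + 2 - m.length = 2 from by omega]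
  have hdk : ∀ (B : List Bool), (m ++ B).drop (m.length + 2) = B.drop 2 := fun B => by
    rw [List.drop_append, List.drop_eq_nil_of_le (by omega),
        show m.length + 2 - m.length = 2 from by omega, List.nil_append]
  rw [show m.length + 3 + 2 = ((m.length + 2) + 1 + 1) + 1 from by omega,
      show m.length + 3 + 3 = ((m.length + 3) + 1 + 1) + 1 from by omega]
  simp only [List.take_succ_cons, List.drop_succ_cons]
  rw [htk, htk, hdk, hdk,
      List.take_of_length_le (l := m ++ [true, false, true]) (i := m.length + 3) (by simp),
      List.take_of_length_le (l := m ++ [true, true, false]) (i := m.length + 3) (by simp)]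
  simp [comp, List.count_append, List.count_cons]
  simp +arith +decide only []
  simp only [← Multiset.cons_coe, ← Multiset.singleton_add]
  ac_rfl


theorem exists_not_unique_of_six_le (n : ℕ) (hn : 6 ≤ n) (s : List Bool) (hs : s.length = n)
    (hpre : s.take 3 = [true, false, false]) (hsuf : s.drop (n - 3) = [true, true, false]) :
    ∃ t : List Bool, psM t = psM s ∧ t ≠ s ∧ t ≠ s.reverse := by
  set m : List Bool := (s.drop 3).take (n - 6) with hm
  have hsd : s = true :: false :: false :: (m ++ [true, true, false]) := by
    conv_lhs => rw [← List.take_append_drop 3 s]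
    rw [hpre]
    have h1 : s.drop 3 = m ++ (s.drop 3).drop (n - 6) := (List.take_append_drop _ _).symm
    have h2 : (s.drop 3).drop (n - 6) = s.drop (n - 3) := by
      rw [List.drop_drop, show 3 + (n - 6) = n - 3 from by omega]
    rw [h1, h2, hsuf]
    rfl
  refine ⟨false :: true :: false :: (m ++ [true, false, true]), ?_, ?_, ?_⟩
  · rw [hsd]; exact key m
  · intro h
    rw [hsd] at h
    simp at h
  · intro h
    have h3 : s.reverse.take 3 = [false, true, true] := by
      rw [hsd]
      simp
    rw [← h] at h3
    simp at h3
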